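/- Let G = (V,E) be a finite connected graph, G' = (V,E') with E ⊆ E', and μ : V → ℕ such that every level set μ^{-1}(m) induces a connected subgraph of G. Define y^μ ∈ {0,1}^{E'} by y^μ_{vw} = 0 iff μ(v) = μ(w). Then y^μ satisfies: (i) all cycle inequalities for cycles of G; (ii) for every {v,w} ∈ E'∖E and every vw-path P in G, y^μ_{vw} ≤ ∑_{e∈P} y^μ_e; (iii) for every {v,w} ∈ E'∖E and every vw-cut C in G, 1 − y^μ_{vw} ≤ ∑_{e∈C}(1 − y^μ_e). -/

import Mathlib

open Finset

section aux

variable {V : Type} {G : SimpleGraph V} (μ : V → ℕ)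

/-- Any walk between vertices with different `μ`-values contains a `μ`-changing edge. -/
lemma walk_exists_nondiag {u v : V} (p : G.Walk u v) (h : μ u ≠ μ v) :
    ∃ e ∈ p.edges, ¬ (Sym2.map μ e).IsDiag := by
  induction p with
  | nil => exact absurd rfl h
  | cons hadj q ih =>
    rename_i a b c
    by_cases hab : μ a = μ b
    · obtain ⟨e, he, hne⟩ := ih (hab ▸ h)
      exact ⟨e, List.mem_cons_of_mem _ he, hne⟩
    · exact ⟨s(a, b), List.mem_cons_self, by simpa using hab⟩

/-- In a closed walk (endpoints with equal `μ`-values), a `μ`-changing edge is never alone. -/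
lemma walk_second_nondiag [DecidableEq V] {u v : V} (p : G.Walk u v) (h : μ u = μ v)
    {e : Sym2 V} (he : e ∈ p.edges) (hnd : ¬ (Sym2.map μ e).IsDiag) :
    ∃ f ∈ p.edges.erase e, ¬ (Sym2.map μ f).IsDiag := by
  induction p with
  | nil => simp at he
  | cons hadj q ih =>
    rename_i a b c
    by_cases hab : μ a = μ b
    · have hne : e ≠ s(a, b) := by
        rintro rfl
        exact hnd (by simpa using hab)
      have he' : e ∈ q.edges := by
        rcases (List.mem_cons).mp he with h1 | h1
        · exact absurd h1 hne
        · exact h1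
      obtain ⟨f, hf, hfnd⟩ := ih (hab ▸ h) he'
      refine ⟨f, ?_, hfnd⟩
      rw [SimpleGraph.Walk.edges_cons, List.erase_cons_tail (by simpa using Ne.symm hne)]
      exact List.mem_cons_of_mem _ hf
    · by_cases hee : e = s(a, b)
      · subst hee
        rw [SimpleGraph.Walk.edges_cons, List.erase_cons_head]
        exact walk_exists_nondiag μ q fun hbc => hab (h.trans hbc.symm)
      · refine ⟨s(a, b), ?_, by simpa using hab⟩
        rw [SimpleGraph.Walk.edges_cons,
          List.erase_cons_tail (by simpa using fun h => hee h.symm)]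
        exact List.mem_cons_self

end aux

/-- if `μ` has connected level sets, then `y^μ` satisfies the cycle,
path and cut inequalities defining multicuts of `G' = (V,E')` lifted from `G`. -/
theorem stmt3 (V : Type) [Fintype V] [DecidableEq V] (G : SimpleGraph V)
    (hG : G.Connected) (Ep : Set (Sym2 V)) (hE : G.edgeSet ⊆ Ep)
    (μ : V → ℕ)
    (hconn : ∀ m ∈ Set.range μ, (G.induce {v | μ v = m}).Connected)
    (y : Sym2 V → ℝ) (hy : ∀ e : Sym2 V, y e = if (e.map μ).IsDiag then 0 else 1) :
    -- (i) cycle inequalities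
    (∀ (u : V) (c : G.Walk u u), c.IsCycle →
        ∀ e ∈ c.edges, y e ≤ ((c.edges.erase e).map y).sum) ∧
    -- (ii) path inequalities
    (∀ v w : V, s(v, w) ∈ Ep → s(v, w) ∉ G.edgeSet →
        ∀ p : G.Walk v w, p.IsPath → y s(v, w) ≤ (p.edges.map y).sum) ∧
    -- (iii) cut inequalities
    (∀ v w : V, s(v, w) ∈ Ep → s(v, w) ∉ G.edgeSet →
        ∀ C : Finset (Sym2 V), ↑C ⊆ G.edgeSet →
          (∀ p : G.Walk v w, ∃ e ∈ p.edges, e ∈ C) →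
          1 - y s(v, w) ≤ ∑ e ∈ C, (1 - y e)) := by
  have hy0 : ∀ e, 0 ≤ y e := by
    intro e; rw [hy e]; split <;> norm_num
  have hy1 : ∀ e, y e ≤ 1 := by
    intro e; rw [hy e]; split <;> norm_num
  have hsum1 : ∀ (l : List (Sym2 V)) (f : Sym2 V), f ∈ l → ¬ (Sym2.map μ f).IsDiag →
      (1 : ℝ) ≤ (l.map y).sum := by
    intro l f hf hfnd
    have : y f ∈ l.map y := List.mem_map_of_mem (f := y) hf
    have h1 : y f = 1 := by rw [hy f]; simp [hfnd]
    calc (1 : ℝ) = y f := h1.symm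
      _ ≤ (l.map y).sum := List.single_le_sum (by simpa using fun e _ => hy0 e) _ this
  refine ⟨?_, ?_, ?_⟩
  · -- (i) cycle
    intro u c _hc e he
    by_cases hd : (Sym2.map μ e).IsDiag
    · rw [hy e, if_pos hd]
      exact List.sum_nonneg (by simpa using fun f _ => hy0 f)
    · obtain ⟨f, hf, hfnd⟩ := walk_second_nondiag μ c rfl he hd
      calc y e ≤ 1 := hy1 e
        _ ≤ ((c.edges.erase e).map y).sum := hsum1 _ f hf hfnd
  · -- (ii) path
    intro v w _ _ p _hp
    by_cases hd : (Sym2.map μ s(v, w)).IsDiag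
    · rw [hy _, if_pos hd]
      exact List.sum_nonneg (by simpa using fun f _ => hy0 f)
    · have hvw : μ v ≠ μ w := by simpa using hd
      obtain ⟨f, hf, hfnd⟩ := walk_exists_nondiag μ p hvw
      calc y s(v, w) ≤ 1 := hy1 _
        _ ≤ (p.edges.map y).sum := hsum1 _ f hf hfnd
  · -- (iii) cut
    intro v w _ _ C _hC hcut
    by_cases hvw : μ v = μ w
    · -- LHS = 1; need an edge of C inside the level set
      have hm : μ v ∈ Set.range μ := ⟨v, rfl⟩
      have hcon := hconn (μ v) hm
      have hv : v ∈ {x | μ x = μ v} := rfl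
      have hw : w ∈ {x | μ x = μ v} := hvw.symm
      obtain ⟨q⟩ := hcon.preconnected ⟨v, hv⟩ ⟨w, hw⟩
      let p : G.Walk v w := q.map (SimpleGraph.Embedding.induce _).toHom
      obtain ⟨e, hep, heC⟩ := hcut p
      -- e is the image of an edge of q, hence diagonal under μ
      have hed : (Sym2.map μ e).IsDiag := by
        rw [show p.edges = _ from SimpleGraph.Walk.edges_map _ _] at hep
        obtain ⟨e', he', rfl⟩ := List.mem_map.mp hep
        induction e' with
        | h x y =>
          obtain ⟨a, ha⟩ := x
          obtain ⟨b, hb⟩ := y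
          have : μ a = μ b := by
            simp only [Set.mem_setOf_eq] at ha hb
            rw [ha, hb]
          simpa using this
      have h1 : (1 : ℝ) - y e = 1 := by rw [hy e, if_pos hed]; ring
      have hs : (1 : ℝ) ≤ ∑ f ∈ C, (1 - y f) := by
        calc (1 : ℝ) = 1 - y e := h1.symm
          _ ≤ ∑ f ∈ C, (1 - y f) :=
            Finset.single_le_sum (f := fun f => (1 : ℝ) - y f)
              (fun f _ => by show (0:ℝ) ≤ 1 - y f; linarith [hy1 f]) heC
      linarith [hy0 s(v, w)]
    · have : y s(v, w) = 1 := by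
        rw [hy]; rw [if_neg]; simpa using hvw
      rw [this]
      simp only [sub_self]
      exact Finset.sum_nonneg fun f _ => by linarith [hy1 f]
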